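/- If a triangulated category T possesses a strong generator, then every classical generator of T is a strong generator. -/

import Mathlib

open CategoryTheory Limits Pretriangulated ZeroObject

universe v u

variable {C : Type u} [Category.{v} C] [Preadditive C] [HasZeroObject C]
  [HasShift C ℤ] [∀ n : ℤ, (CategoryTheory.shiftFunctor C n).Additive]
  [Pretriangulated C] [HasBinaryBiproducts C]

/-- `addClos S` is `⟨S⟩`: the smallest class of objects containing `S` and closed under
isomorphisms, finite direct sums, direct summands and shifts. -/
inductive addClos (S : Set C) : Set C
  | of {X : C} (h : X ∈ S) : addClos S X
  | isoClosed {X Y : C} (e : X ≅ Y) (h : addClos S X) : addClos S Y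
  | zero : addClos S 0
  | shift {X : C} (n : ℤ) (h : addClos S X) : addClos S (X⟦n⟧)
  | sum {X Y : C} (hX : addClos S X) (hY : addClos S Y) : addClos S (X ⊞ Y)
  | summand {X Y : C} (h : addClos S (X ⊞ Y)) : addClos S X

/-- `starSet A B = A * B` : objects `X` fitting in a distinguished triangle
`X₁ → X → X₂ → X₁[1]` with `X₁ ∈ A` and `X₂ ∈ B`. -/
def starSet (A B : Set C) : Set C :=
  {X | ∃ (X₁ X₂ : C) (f : X₁ ⟶ X) (g : X ⟶ X₂) (h : X₂ ⟶ X₁⟦(1 : ℤ)⟧),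
    Triangle.mk f g h ∈ (distTriang C) ∧ X₁ ∈ A ∧ X₂ ∈ B}

/-- `genStep E k` is `⟨E⟩_{k+1}`, defined by `⟨E⟩_1 = ⟨E⟩` and
`⟨E⟩_{k} = ⟨⟨E⟩_{k-1} * ⟨E⟩_1⟩`. -/
def genStep (E : C) : ℕ → Set C
  | 0 => addClos {E}
  | (k + 1) => addClos (starSet (genStep E k) (addClos {E}))

/-- `E` is a classical generator: `⋃_k ⟨E⟩_k` is the whole category. -/
def IsClassicalGenerator (E : C) : Prop :=
  (⋃ k : ℕ, genStep E k) = Set.univ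

/-- `E` is a strong generator: `⟨E⟩_n` is the whole category for some finite `n`. -/
def IsStrongGenerator (E : C) : Prop :=
  ∃ n : ℕ, genStep E n = Set.univ

/-! ### Auxiliary lemmas -/

section Aux

open Category Preadditive

lemma addClos_le {S T : Set C} (h : S ⊆ addClos T) : addClos S ⊆ addClos T := by
  intro X hX
  induction hX with
  | of h' => exact h h'
  | isoClosed e _ ih => exact addClos.isoClosed e ih
  | zero => exact addClos.zero
  | shift n _ ih => exact addClos.shift n ih
  | sum _ _ ih₁ ih₂ => exact addClos.sum ih₁ ih₂
  | summand _ ih => exact addClos.summand ih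

lemma addClos_mono {S T : Set C} (h : S ⊆ T) : addClos S ⊆ addClos T :=
  addClos_le (fun _ hx => addClos.of (h hx))

lemma addClos_idem {S : Set C} : addClos (addClos S) ⊆ addClos S :=
  addClos_le (fun _ hx => hx)

/-- A retract is a direct summand (in a pretriangulated category). -/
lemma mem_addClos_of_retract {S : Set C} {A W : C} (hW : W ∈ addClos S)
    (r : A ⟶ W) (s : W ⟶ A) (hrs : r ≫ s = 𝟙 A) : A ∈ addClos S := by
  obtain ⟨N, m, n, hT⟩ := distinguished_cocone_triangle r
  have h31 : n ≫ r⟦(1 : ℤ)⟧' = 0 := comp_distTriang_mor_zero₃₁ _ hT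
  have hn : n = 0 := by
    have : n = n ≫ (r ≫ s)⟦(1 : ℤ)⟧' := by rw [hrs]; simp
    rw [this, Functor.map_comp, ← assoc, h31, zero_comp]
  obtain ⟨e, -, -⟩ := exists_iso_binaryBiproduct_of_distTriang _ hT hn
  exact addClos.summand (addClos.isoClosed e hW)

/-- Conjugating a distinguished triangle by isomorphisms of its vertices. -/
lemma dist_conj {T : Triangle C} (hT : T ∈ distTriang C) {A B D : C}
    (a : T.obj₁ ≅ A) (b : T.obj₂ ≅ B) (d : T.obj₃ ≅ D) :
    Triangle.mk (a.inv ≫ T.mor₁ ≫ b.hom) (b.inv ≫ T.mor₂ ≫ d.hom)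
      (d.inv ≫ T.mor₃ ≫ a.hom⟦(1 : ℤ)⟧') ∈ distTriang C := by
  refine isomorphic_distinguished _ hT _ (Triangle.isoMk _ _ a.symm b.symm d.symm ?_ ?_ ?_)
  · show (a.inv ≫ T.mor₁ ≫ b.hom) ≫ b.inv = a.inv ≫ T.mor₁; simp
  · show (b.inv ≫ T.mor₂ ≫ d.hom) ≫ d.inv = b.inv ≫ T.mor₂; simp
  · show (d.inv ≫ T.mor₃ ≫ a.hom⟦(1 : ℤ)⟧') ≫ a.inv⟦(1 : ℤ)⟧' = d.inv ≫ T.mor₃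
    simp only [assoc, ← Functor.map_comp, Iso.hom_inv_id, Functor.map_id, comp_id]
    simp

lemma dist_shift {T : Triangle C} (hT : T ∈ distTriang C) (n : ℤ) :
    ∃ (f : T.obj₁⟦n⟧ ⟶ T.obj₂⟦n⟧) (g : T.obj₂⟦n⟧ ⟶ T.obj₃⟦n⟧)
      (h : T.obj₃⟦n⟧ ⟶ T.obj₁⟦n⟧⟦(1 : ℤ)⟧), Triangle.mk f g h ∈ distTriang C :=
  ⟨_, _, _, Triangle.shift_distinguished T hT n⟩

private instance hasBoolProducts : HasLimitsOfShape (Discrete Bool) C := by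
  haveI : HasLimitsOfShape (Discrete (Fin 2)) C := HasFiniteProducts.out 2
  exact hasLimitsOfShape_of_equivalence (Discrete.equivalence finTwoEquiv)

/-- The product over `Bool` is a binary biproduct. -/
noncomputable def prodBoolIso (f : Bool → C) : (∏ᶜ f) ≅ f true ⊞ f false where
  hom := biprod.lift (Pi.π f true) (Pi.π f false)
  inv := Pi.lift (fun b => match b with
    | true => (biprod.fst : f true ⊞ f false ⟶ f true)
    | false => (biprod.snd : f true ⊞ f false ⟶ f false))
  hom_inv_id := by
    apply Pi.hom_ext
    rintro (_ | _) <;> simp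
  inv_hom_id := by
    apply biprod.hom_ext <;> simp

/-- The direct sum of two distinguished triangles is distinguished. -/
lemma dist_biprod {T₁ T₂ : Triangle C} (h₁ : T₁ ∈ distTriang C) (h₂ : T₂ ∈ distTriang C) :
    ∃ (f : T₁.obj₁ ⊞ T₂.obj₁ ⟶ T₁.obj₂ ⊞ T₂.obj₂) (g : T₁.obj₂ ⊞ T₂.obj₂ ⟶ T₁.obj₃ ⊞ T₂.obj₃)
      (h : T₁.obj₃ ⊞ T₂.obj₃ ⟶ (T₁.obj₁ ⊞ T₂.obj₁)⟦(1 : ℤ)⟧),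
      Triangle.mk f g h ∈ distTriang C := by
  let T : Bool → Triangle C := fun b => match b with
    | true => T₁
    | false => T₂
  have hT : ∀ b, T b ∈ distTriang C := by rintro (_ | _) <;> assumption
  have hPT := productTriangle_distinguished T hT
  exact ⟨_, _, _, dist_conj hPT (prodBoolIso (fun b => (T b).obj₁))
    (prodBoolIso (fun b => (T b).obj₂)) (prodBoolIso (fun b => (T b).obj₃))⟩

noncomputable def biprodZeroRight (X : C) : X ⊞ (0 : C) ≅ X :=
  (biprod.braiding X 0) ≪≫ (isoZeroBiprod (isZero_zero C)).symm

noncomputable def shiftBiprodIso (X Y : C) (n : ℤ) : X⟦n⟧ ⊞ Y⟦n⟧ ≅ (X ⊞ Y)⟦n⟧ := by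
  haveI : PreservesBinaryBiproducts (shiftFunctor C n) :=
    preservesBinaryBiproducts_of_preservesBiproducts _
  exact ((shiftFunctor C n).mapBiprod X Y).symm

noncomputable def biprodShuffle (A B D E : C) : (A ⊞ B) ⊞ (D ⊞ E) ≅ (A ⊞ D) ⊞ (B ⊞ E) :=
  biprod.associator A B (D ⊞ E) ≪≫
    biprod.mapIso (Iso.refl A)
      ((biprod.associator B D E).symm ≪≫
        biprod.mapIso (biprod.braiding B D) (Iso.refl E) ≪≫ biprod.associator D B E) ≪≫
    (biprod.associator A D (B ⊞ E)).symm

/-- Normal form: every object of `addClos S` is a direct summand of an object of `S`,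
provided `S` contains `0` and is closed under shifts and binary direct sums. -/
lemma addClos_normal {S : Set C} (h0 : (0 : C) ∈ S)
    (hsh : ∀ {X : C}, X ∈ S → ∀ n : ℤ, X⟦n⟧ ∈ S)
    (hsum : ∀ {X Y : C}, X ∈ S → Y ∈ S → (X ⊞ Y) ∈ S)
    {X : C} (hX : X ∈ addClos S) :
    ∃ (Z M : C), M ∈ S ∧ Nonempty (X ⊞ Z ≅ M) := by
  induction hX with
  | of h' => exact ⟨0, _, h', ⟨biprodZeroRight _⟩⟩
  | isoClosed e _ ih =>
    obtain ⟨Z, M, hM, ⟨i⟩⟩ := ih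
    exact ⟨Z, M, hM, ⟨biprod.mapIso e.symm (Iso.refl Z) ≪≫ i⟩⟩
  | zero => exact ⟨0, 0, h0, ⟨biprodZeroRight 0⟩⟩
  | shift n _ ih =>
    obtain ⟨Z, M, hM, ⟨i⟩⟩ := ih
    exact ⟨Z⟦n⟧, M⟦n⟧, hsh hM n, ⟨shiftBiprodIso _ _ n ≪≫ (shiftFunctor C n).mapIso i⟩⟩
  | sum _ _ ih₁ ih₂ =>
    obtain ⟨Z, M, hM, ⟨i⟩⟩ := ih₁
    obtain ⟨Z', M', hM', ⟨i'⟩⟩ := ih₂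
    exact ⟨Z ⊞ Z', M ⊞ M', hsum hM hM', ⟨biprodShuffle _ _ _ _ ≪≫ biprod.mapIso i i'⟩⟩
  | summand _ ih =>
    obtain ⟨Z, M, hM, ⟨i⟩⟩ := ih
    exact ⟨_ ⊞ Z, M, hM, ⟨(biprod.associator _ _ _).symm ≪≫ i⟩⟩

lemma mem_starSet {A B : Set C} {T : Triangle C} (hT : T ∈ distTriang C)
    (ha : T.obj₁ ∈ A) (hb : T.obj₃ ∈ B) : T.obj₂ ∈ starSet A B :=
  ⟨T.obj₁, T.obj₃, T.mor₁, T.mor₂, T.mor₃, hT, ha, hb⟩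

lemma starSet_mono {A A' B B' : Set C} (hA : A ⊆ A') (hB : B ⊆ B') :
    starSet A B ⊆ starSet A' B' := by
  rintro X ⟨X₁, X₂, f, g, h, hT, h₁, h₂⟩
  exact ⟨X₁, X₂, f, g, h, hT, hA h₁, hB h₂⟩

/-! ### `genStep` closure properties -/

lemma genStep_isAddClos (E : C) : ∀ k : ℕ, ∃ S, genStep E k = addClos S := by
  rintro (_ | k)
  · exact ⟨{E}, rfl⟩
  · exact ⟨_, rfl⟩

lemma addClos_genStep_le (E : C) (k : ℕ) : addClos (genStep E k) ⊆ genStep E k := by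
  obtain ⟨S, hS⟩ := genStep_isAddClos E k
  rw [hS]
  exact addClos_idem

lemma genStep_zero_mem (E : C) (k : ℕ) : (0 : C) ∈ genStep E k :=
  addClos_genStep_le E k addClos.zero

lemma genStep_shift {E : C} {k : ℕ} {X : C} (h : X ∈ genStep E k) (n : ℤ) :
    X⟦n⟧ ∈ genStep E k :=
  addClos_genStep_le E k (addClos.shift n (addClos.of h))

lemma genStep_iso {E : C} {k : ℕ} {X Y : C} (e : X ≅ Y) (h : X ∈ genStep E k) :
    Y ∈ genStep E k :=
  addClos_genStep_le E k (addClos.isoClosed e (addClos.of h))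

lemma genStep_sum {E : C} {k : ℕ} {X Y : C} (hX : X ∈ genStep E k) (hY : Y ∈ genStep E k) :
    (X ⊞ Y) ∈ genStep E k :=
  addClos_genStep_le E k (addClos.sum (addClos.of hX) (addClos.of hY))

lemma genStep_summand {E : C} {k : ℕ} {X Y : C} (h : (X ⊞ Y) ∈ genStep E k) :
    X ∈ genStep E k :=
  addClos_genStep_le E k (addClos.summand (addClos.of h))

lemma genStep_retract {E : C} {k : ℕ} {A W : C} (hW : W ∈ genStep E k)
    (r : A ⟶ W) (s : W ⟶ A) (hrs : r ≫ s = 𝟙 A) : A ∈ genStep E k := by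
  obtain ⟨S, hS⟩ := genStep_isAddClos E k
  rw [hS] at hW ⊢
  exact mem_addClos_of_retract hW r s hrs

lemma genStep_succ {E : C} {k : ℕ} {X : C} (h : X ∈ genStep E k) :
    X ∈ genStep E (k + 1) := by
  have hX : X ∈ starSet (genStep E k) (addClos {E}) :=
    mem_starSet (contractible_distinguished X) h addClos.zero
  exact addClos.of hX

lemma genStep_mono {E : C} {k l : ℕ} (h : k ≤ l) : genStep E k ⊆ genStep E l := by
  induction h with
  | refl => exact fun _ h => h
  | step _ ih => exact fun X hX => genStep_succ (ih hX)

/-! ### The key retract trick (octahedron-free) -/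

/-- Given distinguished triangles `X₁ ⟶ X ⟶ B ⟶ X₁[1]` and `Y₁ ⟶ B ⟶ P ⟶ Y₁[1]`,
the cocone `X'` of the composite `X ⟶ B ⟶ P` is a retract of `K ⊞ P⟦-1⟧` where `K`
sits in a distinguished triangle `X₁ ⟶ K ⟶ Y₁ ⟶ X₁[1]`. This replaces the octahedral
axiom in generation arguments. -/
lemma key_retract {X₁ X B Y₁ P : C} {f : X₁ ⟶ X} {g : X ⟶ B} {h : B ⟶ X₁⟦(1 : ℤ)⟧}
    (hT₁ : Triangle.mk f g h ∈ distTriang C)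
    {u : Y₁ ⟶ B} {p : B ⟶ P} {v : P ⟶ Y₁⟦(1 : ℤ)⟧}
    (hT₂ : Triangle.mk u p v ∈ distTriang C) :
    ∃ (X' K : C) (j : X' ⟶ X) (q : X ⟶ P) (w : P ⟶ X'⟦(1 : ℤ)⟧)
      (a' : X₁ ⟶ K) (θ' : K ⟶ Y₁) (c : Y₁ ⟶ X₁⟦(1 : ℤ)⟧)
      (r : X' ⟶ K ⊞ P⟦(-1 : ℤ)⟧) (s : K ⊞ P⟦(-1 : ℤ)⟧ ⟶ X'),
      (Triangle.mk j q w ∈ distTriang C) ∧ (Triangle.mk a' θ' c ∈ distTriang C) ∧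
        r ≫ s = 𝟙 X' := by
  obtain ⟨X', j, w, hT₃⟩ := distinguished_cocone_triangle₁ (g ≫ p)
  obtain ⟨K, a', θ', hT₄⟩ := distinguished_cocone_triangle₂ (u ≫ h)
  -- build κ : K ⟶ X
  obtain ⟨κ₀, hκ₁₀, hκ₂₀⟩ := complete_distinguished_triangle_morphism₂ _ _ hT₄ hT₁
    (𝟙 X₁) u (by show (u ≫ h) ≫ (𝟙 X₁)⟦(1 : ℤ)⟧' = u ≫ h; simp)
  let κ : K ⟶ X := κ₀
  have hκ₁ : a' ≫ κ = f := by
    have h0 : a' ≫ κ = 𝟙 X₁ ≫ f := hκ₁₀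
    simpa using h0
  have hκ₂ : θ' ≫ u = κ ≫ g := hκ₂₀
  -- θ : X' ⟶ Y₁ with j ≫ g = θ ≫ u
  have hjq : j ≫ (g ≫ p) = 0 := comp_distTriang_mor_zero₁₂ _ hT₃
  obtain ⟨θ₀, hθ₀⟩ := Triangle.coyoneda_exact₂ _ hT₂ (j ≫ g)
    (by show (j ≫ g) ≫ p = 0; rw [assoc]; exact hjq)
  let θ : X' ⟶ Y₁ := θ₀
  have hθ : j ≫ g = θ ≫ u := hθ₀
  -- lam : X' ⟶ K with θ = lam ≫ θ'
  have hgh : g ≫ h = 0 := comp_distTriang_mor_zero₂₃ _ hT₁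
  have hθc : θ ≫ (u ≫ h) = 0 := by
    rw [← assoc, ← hθ, assoc, hgh, comp_zero]
  obtain ⟨lam₀, hlam₀⟩ := Triangle.coyoneda_exact₃ _ hT₄ θ hθc
  let lam : X' ⟶ K := lam₀
  have hlam : θ = lam ≫ θ' := hlam₀
  -- κ' : K ⟶ X' with κ = κ' ≫ j
  have hup : u ≫ p = 0 := comp_distTriang_mor_zero₁₂ _ hT₂
  have hκq : κ ≫ (g ≫ p) = 0 := by
    rw [← assoc, ← hκ₂, assoc, hup, comp_zero]
  obtain ⟨κ₁, hκ₁'⟩ := Triangle.coyoneda_exact₂ _ hT₃ κ hκq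
  let κ' : K ⟶ X' := κ₁
  have hκ' : κ = κ' ≫ j := hκ₁'
  -- correction ω
  have e2 : (lam ≫ κ) ≫ g = θ ≫ u := by rw [assoc, ← hκ₂, ← assoc, ← hlam]
  have hsub : (j - lam ≫ κ) ≫ g = 0 := by rw [sub_comp, hθ, e2, sub_self]
  obtain ⟨ω, hω₀⟩ := Triangle.coyoneda_exact₂ _ hT₁ (j - lam ≫ κ) hsub
  let ω' : X' ⟶ X₁ := ω
  have hω : j - lam ≫ κ = ω' ≫ f := hω₀
  set lam' : X' ⟶ K := lam + ω' ≫ a' with hlam'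
  have hj : lam' ≫ κ = j := by
    rw [hlam', add_comp, assoc, hκ₁, ← hω]
    abel
  -- the defect factors through P⟦-1⟧
  have hT₃' := inv_rot_of_distTriang _ hT₃
  have hD : (𝟙 X' - lam' ≫ κ') ≫ j = 0 := by
    rw [sub_comp, id_comp, assoc, ← hκ', hj, sub_self]
  obtain ⟨ε, hε⟩ := Triangle.coyoneda_exact₂ _ hT₃' (𝟙 X' - lam' ≫ κ') hD
  let ε' : X' ⟶ P⟦(-1 : ℤ)⟧ := ε
  let m : P⟦(-1 : ℤ)⟧ ⟶ X' := (Triangle.mk j (g ≫ p) w).invRotate.mor₁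
  have hε' : 𝟙 X' - lam' ≫ κ' = ε' ≫ m := hε
  refine ⟨X', K, j, g ≫ p, w, a', θ', u ≫ h,
    biprod.lift lam' ε', biprod.desc κ' m,
    hT₃, hT₄, ?_⟩
  rw [biprod.lift_desc, ← hε']
  abel

/-! ### The star absorption lemma -/

lemma star_absorb (E : C) : ∀ (k a : ℕ),
    starSet (genStep E a) (genStep E k) ⊆ genStep E (a + k + 1) := by
  intro k
  induction k with
  | zero =>
    intro a X hX
    exact addClos.of hX
  | succ k ih =>
    intro a X hX
    obtain ⟨X₁, X₂, f, g, h, hT, h₁, h₂⟩ := hX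
    -- closure properties of S_k = starSet (genStep E k) (addClos {E})
    have hS0 : (0 : C) ∈ starSet (genStep E k) (addClos {E}) :=
      mem_starSet (contractible_distinguished 0) (genStep_zero_mem E k) addClos.zero
    have hSsh : ∀ {M : C}, M ∈ starSet (genStep E k) (addClos {E}) → ∀ n : ℤ,
        M⟦n⟧ ∈ starSet (genStep E k) (addClos {E}) := by
      rintro M ⟨Y₁, P, u, p, v, hTM, hY, hP⟩ n
      obtain ⟨u', p', v', hTM'⟩ := dist_shift hTM n
      exact ⟨Y₁⟦n⟧, P⟦n⟧, u', p', v', hTM', genStep_shift hY n, addClos.shift n hP⟩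
    have hSsum : ∀ {M M' : C}, M ∈ starSet (genStep E k) (addClos {E}) →
        M' ∈ starSet (genStep E k) (addClos {E}) →
        (M ⊞ M') ∈ starSet (genStep E k) (addClos {E}) := by
      rintro M M' ⟨Y₁, P, u, p, v, hTM, hY, hP⟩ ⟨Y₁', P', u', p', v', hTM', hY', hP'⟩
      obtain ⟨u'', p'', v'', hTS⟩ := dist_biprod hTM hTM'
      exact ⟨Y₁ ⊞ Y₁', P ⊞ P', u'', p'', v'', hTS, genStep_sum hY hY',
        addClos.sum hP hP'⟩
    -- normal form for X₂ ∈ genStep E (k+1) = addClos S_k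
    have hX₂ : X₂ ∈ addClos (starSet (genStep E k) (addClos {E})) := h₂
    obtain ⟨Z, M, hM, ⟨e⟩⟩ := addClos_normal hS0 hSsh hSsum hX₂
    -- pad the triangle : (X₁, X ⊞ Z, X₂ ⊞ Z) is distinguished
    obtain ⟨f', g', h', hTpad⟩ := dist_biprod hT (contractible_distinguished₁ Z)
    have hV := dist_conj hTpad (biprodZeroRight X₁) (Iso.refl (X ⊞ Z)) e
    -- M ∈ S_k : get its triangle
    obtain ⟨Y₁, P, u, p, v, hTM, hY, hP⟩ := hM
    -- apply the key retract trick
    obtain ⟨X', K, j, q, w, a', θ', c, r, s, hT₃, hT₄, hrs⟩ := key_retract hV hTM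
    -- K ∈ genStep E (a + k + 1)
    have hK : K ∈ genStep E (a + k + 1) :=
      ih a (mem_starSet hT₄ h₁ hY)
    -- P⟦-1⟧ ∈ genStep E (a + k + 1)
    have hPm : P⟦(-1 : ℤ)⟧ ∈ genStep E (a + k + 1) :=
      genStep_shift (genStep_mono (Nat.zero_le _) (hP : P ∈ genStep E 0)) (-1)
    -- X' ∈ genStep E (a + k + 1)
    have hX' : X' ∈ genStep E (a + k + 1) :=
      genStep_retract (genStep_sum hK hPm) r s hrs
    -- X ⊞ Z ∈ genStep E (a + k + 2)
    have hXZ : (X ⊞ Z) ∈ genStep E (a + (k + 1) + 1) := by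
      have : (X ⊞ Z) ∈ starSet (genStep E (a + k + 1)) (addClos {E}) :=
        ⟨X', P, j, q, w, hT₃, hX', hP⟩
      exact addClos.of this
    exact genStep_summand hXZ

end Aux

/-- If a triangulated category possesses a strong generator, then every classical
generator is a strong generator. -/
theorem isStrongGenerator_of_isClassicalGenerator
    (G : C) (hG : IsStrongGenerator G) (E : C) (hE : IsClassicalGenerator E) :
    IsStrongGenerator E := by
  obtain ⟨n, hn⟩ := hG
  have hGmem : G ∈ ⋃ k : ℕ, genStep E k := by rw [hE]; trivial
  obtain ⟨m, hm⟩ := Set.mem_iUnion.1 hGmem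
  have hbase : addClos {G} ⊆ genStep E m := by
    intro X hX
    refine addClos_genStep_le E m (addClos_le ?_ hX)
    rintro Y rfl
    exact addClos.of hm
  have hstep : ∀ j : ℕ, ∃ c : ℕ, genStep G j ⊆ genStep E c := by
    intro j
    induction j with
    | zero => exact ⟨m, hbase⟩
    | succ j ih =>
      obtain ⟨cj, hc⟩ := ih
      refine ⟨cj + m + 1, ?_⟩
      intro X hX
      have hX' : X ∈ addClos (starSet (genStep E cj) (genStep E m)) :=
        addClos_mono (starSet_mono hc hbase) hX
      have := addClos_le (fun Y hY => addClos.of (star_absorb E m cj hY)) hX'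
      exact addClos_genStep_le E _ this
  obtain ⟨c, hc⟩ := hstep n
  refine ⟨c, ?_⟩
  rw [hn] at hc
  exact Set.eq_univ_of_univ_subset hc
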